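/- Let $y_0>0$, $\rho>0$, and suppose $\varphi:(0,y_0]\to(0,\infty)$ is a $C^1$ increasing function and $\psi:(0,y_0]\to(0,1)$ is continuous, with $\varphi'(y)=\frac{\varphi(y)(1-\psi(y))}{y}$ for all $y\in(0,y_0]$ and $\lim_{y\to0^+}\psi(y)=1$. Then for every $\varepsilon>0$ there exists a constant $B_\varepsilon>0$ such that $\varphi(y)>B_\varepsilon\,y^{\varepsilon}$ for all $y\in(0,y_0]$. -/

import Mathlib

open Filter Set Topology

/-- if `ψ(y) → 1` as `y → 0⁺`, then for every `ε > 0` there is `B_ε > 0`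
with `φ(y) > B_ε y^ε` for all `y ∈ (0, y₀]`. -/
theorem phi_lower_estimate (y₀ ρ : ℝ) (hy₀ : 0 < y₀) (hρ : 0 < ρ)
    (φ ψ : ℝ → ℝ)
    (hφpos : ∀ y ∈ Set.Ioc 0 y₀, 0 < φ y)
    (hφmono : StrictMonoOn φ (Set.Ioc 0 y₀))
    (hψmem : ∀ y ∈ Set.Ioc 0 y₀, 0 < ψ y ∧ ψ y < 1)
    (hψcont : ContinuousOn ψ (Set.Ioc 0 y₀))
    (hφode : ∀ y ∈ Set.Ioc 0 y₀, HasDerivAt φ (φ y * (1 - ψ y) / y) y)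
    (hψlim : Filter.Tendsto ψ (nhdsWithin 0 (Set.Ioi 0)) (nhds 1)) :
    ∀ ε > (0 : ℝ), ∃ B > (0 : ℝ), ∀ y ∈ Set.Ioc 0 y₀, B * y ^ ε < φ y := by
  intro ε hε
  have hev : ∀ᶠ y in nhdsWithin 0 (Set.Ioi 0), 1 - ε < ψ y :=
    hψlim.eventually (eventually_gt_nhds (by linarith))
  obtain ⟨u, hu0, hu⟩ := mem_nhdsGT_iff_exists_Ioo_subset.mp hev
  set y₁ : ℝ := min (u / 2) y₀ with hy₁def
  have hy₁0 : 0 < y₁ := lt_min (by simpa using half_pos (mem_Ioi.mp hu0)) hy₀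
  have hy₁y₀ : y₁ ≤ y₀ := min_le_right _ _
  have hy₁u : y₁ < u := lt_of_le_of_lt (min_le_left _ _) (by linarith [mem_Ioi.mp hu0])
  have hy₁mem : y₁ ∈ Set.Ioc 0 y₀ := ⟨hy₁0, hy₁y₀⟩
  set g : ℝ → ℝ := fun y => φ y * y ^ (-ε) with hgdef
  -- derivative of g
  have hg' : ∀ y ∈ Set.Ioo 0 y₁, HasDerivAt g (φ y * y ^ (-ε - 1) * (1 - ψ y - ε)) y := by
    intro y hy
    have hy0 : 0 < y := hy.1
    have hymem : y ∈ Set.Ioc 0 y₀ := ⟨hy0, hy.2.le.trans hy₁y₀⟩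
    have h1 := hφode y hymem
    have h2 := Real.hasDerivAt_rpow_const (x := y) (p := -ε) (Or.inl hy0.ne')
    have h3 := h1.mul h2
    refine h3.congr_deriv ?_
    have hsub : y ^ (-ε - 1) = y ^ (-ε) / y := by
      rw [Real.rpow_sub hy0, Real.rpow_one]
    rw [hsub]
    field_simp
    ring
  have hgcont : ContinuousOn g (Set.Ioc 0 y₁) := by
    intro y hy
    have hymem : y ∈ Set.Ioc 0 y₀ := ⟨hy.1, hy.2.trans hy₁y₀⟩
    exact ((hφode y hymem).continuousAt.mul
      (Real.continuousAt_rpow_const y (-ε) (Or.inl hy.1.ne'))).continuousWithinAt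
  have hanti : StrictAntiOn g (Set.Ioc 0 y₁) := by
    apply strictAntiOn_of_deriv_neg (convex_Ioc _ _) hgcont
    intro x hx
    rw [interior_Ioc] at hx
    rw [(hg' x hx).deriv]
    have hφx : 0 < φ x := hφpos x ⟨hx.1, hx.2.le.trans hy₁y₀⟩
    have hψx : 1 - ε < ψ x := hu ⟨hx.1, hx.2.trans hy₁u⟩
    have hpow : 0 < x ^ (-ε - 1) := Real.rpow_pos_of_pos hx.1 _
    have : 1 - ψ x - ε < 0 := by linarith
    exact mul_neg_of_pos_of_neg (mul_pos hφx hpow) this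
  have hφ₁ : 0 < φ y₁ := hφpos y₁ hy₁mem
  have hc₁pos : 0 < g y₁ := mul_pos hφ₁ (Real.rpow_pos_of_pos hy₁0 _)
  have hy₀pow : 0 < y₀ ^ ε := Real.rpow_pos_of_pos hy₀ _
  set c₂ : ℝ := φ y₁ / y₀ ^ ε with hc₂def
  have hc₂pos : 0 < c₂ := div_pos hφ₁ hy₀pow
  refine ⟨min (g y₁) c₂ / 2, half_pos (lt_min hc₁pos hc₂pos), ?_⟩
  intro y hy
  have hypow : 0 < y ^ ε := Real.rpow_pos_of_pos hy.1 _
  by_cases hcase : y ≤ y₁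
  · -- g y ≥ g y₁
    have hge : g y₁ ≤ g y := by
      rcases eq_or_lt_of_le hcase with h | h
      · rw [h]
      · exact (hanti ⟨hy.1, hcase⟩ ⟨hy₁0, le_refl _⟩ h).le
    have hkey : g y₁ * y ^ ε ≤ φ y := by
      have : g y * y ^ ε = φ y := by
        rw [hgdef]
        simp only
        rw [mul_assoc, ← Real.rpow_add hy.1]
        simp
      calc g y₁ * y ^ ε ≤ g y * y ^ ε := by nlinarith
        _ = φ y := this
    have hB : min (g y₁) c₂ / 2 < g y₁ := by
      have := min_le_left (g y₁) c₂
      linarith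
    calc min (g y₁) c₂ / 2 * y ^ ε < g y₁ * y ^ ε := by nlinarith
      _ ≤ φ y := hkey
  · push_neg at hcase
    have hφy : φ y₁ < φ y := hφmono hy₁mem hy hcase
    have hyle : y ^ ε ≤ y₀ ^ ε := Real.rpow_le_rpow hy.1.le hy.2 hε.le
    have hB : min (g y₁) c₂ / 2 < c₂ := by
      have := min_le_right (g y₁) c₂
      linarith
    have h1 : c₂ * y ^ ε ≤ c₂ * y₀ ^ ε := by nlinarith
    have h2 : c₂ * y₀ ^ ε = φ y₁ := by
      rw [hc₂def]; field_simp
    calc min (g y₁) c₂ / 2 * y ^ ε < c₂ * y ^ ε := by nlinarith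
      _ ≤ c₂ * y₀ ^ ε := h1
      _ = φ y₁ := h2
      _ < φ y := hφy
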